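/- arXiv:1303.2491 — 3 statements merged into one kernel-verified Lean document; each statement's English description precedes it below -/
import Mathlib

section
/- Let $r>0$, $T\in(0,\infty]$, and let $u:(0,T)\to\mathbb{R}$ be differentiable with $u'(t)\ge u(t)^2+r\,u(t)$ for all $t\in(0,T)$. Then $u(t)\ge -\dfrac{r e^{rt}}{e^{rt}-1}$ for all $t\in(0,T)$. -/
open Set Real Filter

/-- Comparison core: if `f' ≥ c · f` on `[a,b]` with `c` continuous and `f a ≥ 0`
then `f b ≥ 0`. -/
lemma lyh_comp (a b : ℝ) (hab : a ≤ b) (f f' c : ℝ → ℝ)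
    (hf : ∀ t ∈ Set.Icc a b, HasDerivAt f (f' t) t)
    (hc : ContinuousOn c (Set.Icc a b))
    (hcf : ∀ t ∈ Set.Icc a b, c t * f t ≤ f' t)
    (ha : 0 ≤ f a) : 0 ≤ f b := by
  by_contra hb
  push_neg at hb
  have habl : a < b := by
    rcases lt_or_eq_of_le hab with h | h
    · exact h
    · exact absurd ha (by rw [h]; exact not_le.2 hb)
  have hfc : ContinuousOn f (Set.Icc a b) :=
    fun t ht => (hf t ht).continuousAt.continuousWithinAt
  obtain ⟨tm, htm, hmax'⟩ :=
    isCompact_Icc.exists_isMaxOn ⟨a, Set.left_mem_Icc.2 hab⟩ hc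
  have hmax : ∀ t ∈ Set.Icc a b, c t ≤ c tm := fun t ht => hmax' ht
  set K := c tm with hK
  set S := Set.Icc a b ∩ f ⁻¹' Set.Ici 0 with hS
  have hSne : S.Nonempty := ⟨a, Set.left_mem_Icc.2 hab, ha⟩
  have hSclosed : IsClosed S :=
    hfc.preimage_isClosed_of_isClosed isClosed_Icc isClosed_Ici
  have hSbdd : BddAbove S := ⟨b, fun t ht => ht.1.2⟩
  set τ := sSup S with hτdef
  have hτS : τ ∈ S := hSclosed.csSup_mem hSne hSbdd
  have hτI : τ ∈ Set.Icc a b := hτS.1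
  have hτf : 0 ≤ f τ := hτS.2
  have hτb : τ < b := by
    rcases lt_or_eq_of_le hτI.2 with h | h
    · exact h
    · exact absurd hτf (by rw [h]; exact not_le.2 hb)
  have hneg : ∀ t ∈ Set.Ioc τ b, f t < 0 := by
    intro t ht
    by_contra h
    push_neg at h
    have : t ∈ S := ⟨⟨hτI.1.trans ht.1.le, ht.2⟩, h⟩
    exact absurd (le_csSup hSbdd this) (not_le.2 ht.1)
  -- f τ = 0
  have hfτ0 : f τ = 0 := by
    refine le_antisymm ?_ hτf
    have htend : Filter.Tendsto f (nhdsWithin τ (Set.Ioi τ)) (nhds (f τ)) :=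
      ((hf τ hτI).continuousAt.tendsto).mono_left nhdsWithin_le_nhds
    have hev : ∀ᶠ t in nhdsWithin τ (Set.Ioi τ), f t ≤ 0 := by
      filter_upwards [Ioc_mem_nhdsGT_of_mem ⟨le_refl τ, hτb⟩] with t ht
      exact (hneg t ht).le
    exact le_of_tendsto htend hev
  -- integrating factor
  set h : ℝ → ℝ := fun t => f t * Real.exp (-K * t) with hh
  have hfle : ∀ t ∈ Set.Icc τ b, f t ≤ 0 := by
    intro t ht
    rcases eq_or_lt_of_le ht.1 with heq | hlt
    · rw [← heq, hfτ0]
    · exact (hneg t ⟨hlt, ht.2⟩).le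
  have hsub : Set.Icc τ b ⊆ Set.Icc a b :=
    Set.Icc_subset_Icc hτI.1 le_rfl
  have hhd : ∀ t ∈ Set.Icc τ b,
      HasDerivAt h (f' t * Real.exp (-K * t) + f t * (Real.exp (-K * t) * (-K))) t := by
    intro t ht
    have he : HasDerivAt (fun t => Real.exp (-K * t)) (Real.exp (-K * t) * (-K)) t := by
      have h1 : HasDerivAt (fun t : ℝ => -K * t) (-K) t := by
        simpa using (hasDerivAt_id t).const_mul (-K)
      simpa [mul_comm] using h1.exp
    exact (hf t (hsub ht)).mul he
  have hmono : MonotoneOn h (Set.Icc τ b) := by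
    apply monotoneOn_of_hasDerivWithinAt_nonneg (convex_Icc τ b)
      (f' := fun t => f' t * Real.exp (-K * t) + f t * (Real.exp (-K * t) * (-K)))
      (fun t ht => (hhd t ht).continuousAt.continuousWithinAt)
      (fun t ht => (hhd t (interior_subset ht)).hasDerivWithinAt)
    intro t ht
    rw [interior_Icc] at ht
    have ht' : t ∈ Set.Icc τ b := ⟨ht.1.le, ht.2.le⟩
    have h1 : c t * f t ≤ f' t := hcf t (hsub ht')
    have h2 : c t ≤ K := hmax t (hsub ht')
    have h3 : f t ≤ 0 := hfle t ht'
    have h4 : (0:ℝ) < Real.exp (-K * t) := Real.exp_pos _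
    nlinarith [mul_le_mul_of_nonpos_right h2 h3]
  have := hmono (Set.left_mem_Icc.2 hτb.le) (Set.right_mem_Icc.2 hτb.le) hτb.le
  rw [hh] at this
  simp only [hfτ0, zero_mul] at this
  nlinarith [Real.exp_pos (-K * b)]

/-- The barrier `W r s t = -(r e^{r(t-s)})/(e^{r(t-s)} - 1)`. -/
noncomputable def lyhW (r s t : ℝ) : ℝ :=
  -(r * Real.exp (r * (t - s))) / (Real.exp (r * (t - s)) - 1)

lemma lyhW_denom_pos (r s t : ℝ) (hr : 0 < r) (hst : s < t) :
    0 < Real.exp (r * (t - s)) - 1 := by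
  have h : (0:ℝ) < r * (t - s) := mul_pos hr (sub_pos.2 hst)
  have := Real.one_lt_exp_iff.2 h
  linarith

lemma lyhW_deriv (r s t : ℝ) (hr : 0 < r) (hst : s < t) :
    HasDerivAt (lyhW r s) ((lyhW r s t) ^ 2 + r * lyhW r s t) t := by
  have hne : Real.exp (r * (t - s)) - 1 ≠ 0 := (lyhW_denom_pos r s t hr hst).ne'
  have hE : HasDerivAt (fun t => Real.exp (r * (t - s))) (Real.exp (r * (t - s)) * r) t := by
    have h1 : HasDerivAt (fun t : ℝ => r * (t - s)) r t := by
      simpa using ((hasDerivAt_id t).sub_const s).const_mul r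
    exact (Real.hasDerivAt_exp (r * (t - s))).comp t h1
  have hN : HasDerivAt (fun t => -(r * Real.exp (r * (t - s))))
      (-(r * (Real.exp (r * (t - s)) * r))) t := (hE.const_mul r).neg
  have hD : HasDerivAt (fun t => Real.exp (r * (t - s)) - 1)
      (Real.exp (r * (t - s)) * r) t := hE.sub_const 1
  have := hN.div hD hne
  refine this.congr_deriv ?_
  unfold lyhW
  field_simp
  ring

lemma lyhW_cont (r s : ℝ) (hr : 0 < r) : ContinuousOn (lyhW r s) (Set.Ioi s) :=
  fun t ht => (lyhW_deriv r s t hr ht).continuousAt.continuousWithinAt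

/-- Scalar ODE comparison underlying the Li–Yau–Harnack inequality:
if `u' ≥ u^2 + r u` on `(0, T)` (with `T ∈ (0, ∞]`) then
`u(t) ≥ -r e^{rt}/(e^{rt} - 1)` on `(0, T)`. -/
theorem stmt0 (r : ℝ) (hr : 0 < r) (T : EReal) (hT : 0 < T)
    (u u' : ℝ → ℝ)
    (hderiv : ∀ t : ℝ, 0 < t → (t : EReal) < T → HasDerivAt u (u' t) t)
    (hineq : ∀ t : ℝ, 0 < t → (t : EReal) < T → u t ^ 2 + r * u t ≤ u' t) :
    ∀ t : ℝ, 0 < t → (t : EReal) < T →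
      -(r * Real.exp (r * t)) / (Real.exp (r * t) - 1) ≤ u t := by
  intro t₀ ht₀ ht₀T
  -- membership of [· , t₀] in (0, T)
  have hmem : ∀ t : ℝ, 0 < t → t ≤ t₀ → (t : EReal) < T := by
    intro t _ hle
    exact lt_of_le_of_lt (EReal.coe_le_coe_iff.2 hle) ht₀T
  -- Step 1: comparison with shifted barriers.
  have key : ∀ s : ℝ, s ∈ Set.Ioo 0 t₀ → lyhW r s t₀ ≤ u t₀ := by
    intro s hs
    -- u is continuous on [s, t₀]
    have hucont : ContinuousOn u (Set.Icc s t₀) := by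
      intro t ht
      exact (hderiv t (hs.1.trans_le ht.1) (hmem t (hs.1.trans_le ht.1) ht.2)).continuousAt.continuousWithinAt
    obtain ⟨tmin, htmin, hmin'⟩ :=
      isCompact_Icc.exists_isMinOn ⟨s, Set.left_mem_Icc.2 hs.2.le⟩ hucont
    have hmin : ∀ t ∈ Set.Icc s t₀, u tmin ≤ u t := fun t ht => hmin' ht
    set m := u tmin with hm
    -- choose ε ∈ (s, t₀) with lyhW r s ε < m
    have hbot : Filter.Tendsto (lyhW r s) (nhdsWithin s (Set.Ioi s)) Filter.atBot := by
      have hnum : Filter.Tendsto (fun t => -(r * Real.exp (r * (t - s))))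
          (nhdsWithin s (Set.Ioi s)) (nhds (-r)) := by
        have : Filter.Tendsto (fun t : ℝ => -(r * Real.exp (r * (t - s)))) (nhds s)
            (nhds (-(r * Real.exp (r * (s - s))))) := by
          apply Continuous.tendsto
          continuity
        simpa using this.mono_left nhdsWithin_le_nhds
      have hden : Filter.Tendsto (fun t => (Real.exp (r * (t - s)) - 1)⁻¹)
          (nhdsWithin s (Set.Ioi s)) Filter.atTop := by
        apply tendsto_inv_nhdsGT_zero.comp
        rw [tendsto_nhdsWithin_iff]
        constructor
        · have : Filter.Tendsto (fun t : ℝ => Real.exp (r * (t - s)) - 1) (nhds s)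
              (nhds (Real.exp (r * (s - s)) - 1)) := by
            apply Continuous.tendsto
            continuity
          simpa using this.mono_left nhdsWithin_le_nhds
        · filter_upwards [self_mem_nhdsWithin] with t ht
          exact lyhW_denom_pos r s t hr ht
      have := hnum.neg_mul_atTop (by linarith : -r < 0) hden
      refine this.congr (fun t => ?_)
      rw [lyhW, div_eq_mul_inv]
    obtain ⟨ε, hεI, hεm⟩ : ∃ ε, ε ∈ Set.Ioo s t₀ ∧ lyhW r s ε < m := by
      have h1 : ∀ᶠ t in nhdsWithin s (Set.Ioi s), lyhW r s t < m :=
        hbot.eventually (Filter.eventually_lt_atBot m)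
      have h2 : Set.Ioo s t₀ ∈ nhdsWithin s (Set.Ioi s) :=
        Ioo_mem_nhdsGT_of_mem ⟨le_refl s, hs.2⟩
      obtain ⟨ε, hε1, hε2⟩ := (h1.and (Filter.eventually_mem_set.2 h2)).exists
      exact ⟨ε, hε2, hε1⟩
    -- apply the comparison lemma on [ε, t₀]
    have hcomp := lyh_comp ε t₀ hεI.2.le
      (fun t => u t - lyhW r s t)
      (fun t => u' t - ((lyhW r s t) ^ 2 + r * lyhW r s t))
      (fun t => u t + lyhW r s t + r)
      ?_ ?_ ?_ ?_
    · linarith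
    · intro t ht
      have hts : s < t := hεI.1.trans_le ht.1
      have ht0 : 0 < t := hs.1.trans hts
      exact (hderiv t ht0 (hmem t ht0 ht.2)).sub (lyhW_deriv r s t hr hts)
    · have hsub : Set.Icc ε t₀ ⊆ Set.Ioi s := fun t ht => hεI.1.trans_le ht.1
      apply ContinuousOn.add
      apply ContinuousOn.add
      · exact hucont.mono (Set.Icc_subset_Icc hεI.1.le le_rfl)
      · exact (lyhW_cont r s hr).mono hsub
      · exact continuousOn_const
    · intro t ht
      have hts : s < t := hεI.1.trans_le ht.1
      have ht0 : 0 < t := hs.1.trans hts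
      have h1 := hineq t ht0 (hmem t ht0 ht.2)
      nlinarith [h1]
    · have : m ≤ u ε := hmin ε ⟨hεI.1.le, hεI.2.le⟩
      linarith
  -- Step 2: let s → 0⁺.
  have hW0 : lyhW r 0 t₀ = -(r * Real.exp (r * t₀)) / (Real.exp (r * t₀) - 1) := by
    simp [lyhW]
  rw [← hW0]
  have hne : Real.exp (r * (t₀ - 0)) - 1 ≠ 0 := (lyhW_denom_pos r 0 t₀ hr ht₀).ne'
  have htend : Filter.Tendsto (fun s => lyhW r s t₀) (nhdsWithin 0 (Set.Ioi 0))
      (nhds (lyhW r 0 t₀)) := by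
    have hc : ContinuousAt (fun s => lyhW r s t₀) 0 := by
      unfold lyhW
      apply ContinuousAt.div
      · fun_prop
      · fun_prop
      · exact hne
    exact hc.tendsto.mono_left nhdsWithin_le_nhds
  refine le_of_tendsto htend ?_
  filter_upwards [Ioo_mem_nhdsGT_of_mem ⟨le_refl (0:ℝ), ht₀⟩] with s hs
  exact key s hs
end

section
/- For every $\rho\in(0,1)$ there exists a unique pair $(p,q)$ of real numbers with $0<p<1$, $q>0$, $(1-p)e^{p}=(1+q)e^{-q}$, and $p=\rho\,q$. -/
open Real Set

/-- For every `ρ ∈ (0,1)` there is a unique pair `(p,q)` with `0 < p < 1`, `q > 0`,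
`(1-p)e^p = (1+q)e^{-q}` and `p = ρ q`. -/
theorem stmt12 (ρ : ℝ) (hρ : ρ ∈ Set.Ioo (0:ℝ) 1) :
    ∃! pq : ℝ × ℝ, 0 < pq.1 ∧ pq.1 < 1 ∧ 0 < pq.2 ∧
      (1 - pq.1) * Real.exp pq.1 = (1 + pq.2) * Real.exp (-pq.2) ∧ pq.1 = ρ * pq.2 := by
  obtain ⟨hρ0, hρ1⟩ := hρ
  set f : ℝ → ℝ := fun q => (1 + q) * Real.exp (-q) - (1 - ρ*q) * Real.exp (ρ*q) with hfdef
  have hcont : Continuous f := by fun_prop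
  set s : ℝ := (-2 * Real.log ρ) / (1 + ρ) with hsdef
  have hlog : Real.log ρ < 0 := Real.log_neg hρ0 hρ1
  have h1ρ : 0 < 1 + ρ := by linarith
  have hs0 : 0 < s := div_pos (by linarith) h1ρ
  -- derivative of f
  have hderiv : ∀ q : ℝ, HasDerivAt f (q * (ρ^2 * Real.exp (ρ*q) - Real.exp (-q))) q := by
    intro q
    have h1 : HasDerivAt (fun q : ℝ => (1 + q) * Real.exp (-q))
        (1 * Real.exp (-q) + (1 + q) * (Real.exp (-q) * (-1))) q :=
      (((hasDerivAt_id q).const_add 1).mul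
        ((Real.hasDerivAt_exp (-q)).comp q (hasDerivAt_id q).neg))
    have h2 : HasDerivAt (fun q : ℝ => (1 - ρ*q) * Real.exp (ρ*q))
        ((-(ρ*1)) * Real.exp (ρ*q) + (1 - ρ*q) * (Real.exp (ρ*q) * (ρ*1))) q :=
      ((((hasDerivAt_id q).const_mul ρ).const_sub 1).mul
        ((Real.hasDerivAt_exp (ρ*q)).comp q ((hasDerivAt_id q).const_mul ρ)))
    have h3 := h1.sub h2
    exact h3.congr_deriv (by ring)
  have hcmp : ∀ q : ℝ, ρ^2 * Real.exp (ρ*q) = Real.exp (Real.log ρ + Real.log ρ + ρ*q) := by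
    intro q
    rw [Real.exp_add, Real.exp_add, Real.exp_log hρ0]
    ring
  -- sign of the derivative
  have hDneg : ∀ q ∈ Set.Ioo (0:ℝ) s, q * (ρ^2 * Real.exp (ρ*q) - Real.exp (-q)) < 0 := by
    intro q hq
    have hq1 : q * (1 + ρ) < -2 * Real.log ρ := (lt_div_iff₀ h1ρ).mp hq.2
    have : ρ^2 * Real.exp (ρ*q) < Real.exp (-q) := by
      rw [hcmp q]
      exact Real.exp_lt_exp.mpr (by linarith)
    have hq0 := hq.1
    nlinarith
  have hDpos : ∀ q ∈ Set.Ioi s, 0 < q * (ρ^2 * Real.exp (ρ*q) - Real.exp (-q)) := by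
    intro q hq
    have hq' : s < q := hq
    have hq1 : -2 * Real.log ρ < q * (1 + ρ) := (div_lt_iff₀ h1ρ).mp hq'
    have : Real.exp (-q) < ρ^2 * Real.exp (ρ*q) := by
      rw [hcmp q]
      exact Real.exp_lt_exp.mpr (by linarith)
    have hq0 : 0 < q := lt_trans hs0 hq'
    nlinarith
  -- monotonicity
  have hanti : StrictAntiOn f (Set.Icc 0 s) := by
    apply strictAntiOn_of_deriv_neg (convex_Icc 0 s) hcont.continuousOn
    intro q hq
    rw [interior_Icc] at hq
    rw [(hderiv q).deriv]
    exact hDneg q hq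
  have hmono : StrictMonoOn f (Set.Ici s) := by
    apply strictMonoOn_of_deriv_pos (convex_Ici s) hcont.continuousOn
    intro q hq
    rw [interior_Ici] at hq
    rw [(hderiv q).deriv]
    exact hDpos q hq
  have hf0 : f 0 = 0 := by simp [hfdef]
  have hfs : f s < 0 := by
    have := hanti (Set.mem_Icc.mpr ⟨le_refl 0, hs0.le⟩) (Set.mem_Icc.mpr ⟨hs0.le, le_refl s⟩) hs0
    rwa [hf0] at this
  -- a point where f is positive
  set Q : ℝ := max (s + 1) (1/ρ) with hQdef
  have hQs : s < Q := lt_of_lt_of_le (by linarith) (le_max_left _ _)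
  have hQρ : 1 ≤ ρ * Q := by
    have h1 : 1/ρ ≤ Q := le_max_right _ _
    rw [div_le_iff₀ hρ0] at h1
    nlinarith
  have hQ0 : 0 < Q := lt_trans hs0 hQs
  have hfQ : 0 < f Q := by
    have h1 : (1 - ρ*Q) * Real.exp (ρ*Q) ≤ 0 :=
      mul_nonpos_of_nonpos_of_nonneg (by linarith) (Real.exp_pos _).le
    have h2 : 0 < (1 + Q) * Real.exp (-Q) :=
      mul_pos (by linarith) (Real.exp_pos _)
    simp only [hfdef]
    linarith
  -- existence of the zero
  have hIVT : (0:ℝ) ∈ f '' Set.Ioo s Q := by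
    apply intermediate_value_Ioo hQs.le hcont.continuousOn
    exact Set.mem_Ioo.mpr ⟨hfs, hfQ⟩
  obtain ⟨q₀, hq₀mem, hq₀⟩ := hIVT
  have hq₀s : s < q₀ := hq₀mem.1
  have hq₀0 : 0 < q₀ := lt_trans hs0 hq₀s
  have heq₀ : (1 - ρ*q₀) * Real.exp (ρ*q₀) = (1 + q₀) * Real.exp (-q₀) := by
    have : f q₀ = 0 := hq₀
    simp only [hfdef] at this
    linarith
  have hp₀1 : ρ * q₀ < 1 := by
    nlinarith [Real.exp_pos (ρ*q₀), Real.exp_pos (-q₀), mul_pos (show (0:ℝ) < 1 + q₀ by linarith) (Real.exp_pos (-q₀))]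
  refine ⟨(ρ * q₀, q₀), ⟨mul_pos hρ0 hq₀0, hp₀1, hq₀0, heq₀, rfl⟩, ?_⟩
  rintro ⟨p, q⟩ ⟨hp0, hp1, hq0, heq, hpq⟩
  simp only at hp0 hp1 hq0 heq hpq
  subst hpq
  have hfq : f q = 0 := by
    simp only [hfdef]
    linarith
  have hqs : s < q := by
    by_contra h
    push_neg at h
    have := hanti (Set.mem_Icc.mpr ⟨le_refl 0, hs0.le⟩) (Set.mem_Icc.mpr ⟨hq0.le, h⟩) hq0
    rw [hf0, hfq] at this
    exact lt_irrefl 0 this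
  have : q = q₀ := hmono.injOn hqs.le hq₀s.le (by rw [hfq, hq₀])
  rw [this]
end

section
/- For $k\in(0,1)$ let $y_1(k)=1-p(k)\in(0,1)$ and $y_2(k)=1+q(k)\in(1,\infty)$ denote the two solutions of $y=ke^{y-1}$, so $p(k),q(k)>0$. Then as $k\to1^-$ one has $p(k)\to0$, $q(k)\to0$ and $p(k)/q(k)\to1$; and as $k\to0^+$ one has $p(k)\to1$, $q(k)\to+\infty$ and $p(k)/q(k)\to0$. -/
open Real Set Filter

private lemma mono_aux {f f' : ℝ → ℝ} {D : Set ℝ} (hD : Convex ℝ D)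
    (hd : ∀ x, HasDerivAt f (f' x) x) (h0 : ∀ x ∈ interior D, 0 ≤ f' x) :
    MonotoneOn f D :=
  monotoneOn_of_hasDerivWithinAt_nonneg hD
    (fun x _ => (hd x).continuousAt.continuousWithinAt)
    (fun x _ => (hd x).hasDerivWithinAt) h0

private lemma hEN (t : ℝ) : HasDerivAt (fun t : ℝ => Real.exp (-t)) (-Real.exp (-t)) t := by
  have := (Real.hasDerivAt_exp (-t)).comp t (hasDerivAt_neg t)
  simpa [Function.comp_def] using this

private lemma expA {x : ℝ} (hx : 0 ≤ x) : (1 - x) * Real.exp x ≤ 1 - x^2/2 := by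
  have dA : ∀ t : ℝ, HasDerivAt (fun t : ℝ => 1 - t^2/2 - (1-t)*Real.exp t)
      (t * Real.exp t - t) t := by
    intro t
    have h1 : HasDerivAt (fun t : ℝ => 1 - t^2/2) (-t) t := by
      have := ((hasDerivAt_pow 2 t).div_const 2).const_sub 1
      simpa using this
    have h2 : HasDerivAt (fun t : ℝ => (1-t)*Real.exp t)
        ((-1) * Real.exp t + (1-t)*Real.exp t) t :=
      ((hasDerivAt_id t).const_sub 1).mul (Real.hasDerivAt_exp t)
    exact (h1.sub h2).congr_deriv (by ring)
  have key := mono_aux (f' := fun t => t * Real.exp t - t) (convex_Ici 0) dA ?_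
  · have := key (self_mem_Ici) hx hx
    simpa using this
  · intro t ht
    simp only [interior_Ici, mem_Ioi] at ht
    show (0:ℝ) ≤ t * Real.exp t - t
    nlinarith [Real.one_le_exp ht.le]

private lemma expB {x : ℝ} (hx : 0 ≤ x) (hx1 : x ≤ 1) :
    1 - x^2/2 - x^3 ≤ (1 - x) * Real.exp x := by
  have dB : ∀ t : ℝ, HasDerivAt (fun t : ℝ => (1-t)*Real.exp t - (1 - t^2/2 - t^3))
      (-(t * Real.exp t) + t + 3*t^2) t := by
    intro t
    have h2 : HasDerivAt (fun t : ℝ => (1-t)*Real.exp t)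
        ((-1) * Real.exp t + (1-t)*Real.exp t) t :=
      ((hasDerivAt_id t).const_sub 1).mul (Real.hasDerivAt_exp t)
    have h1 : HasDerivAt (fun t : ℝ => 1 - t^2/2 - t^3) (-t - 3*t^2) t := by
      have a := ((hasDerivAt_pow 2 t).div_const 2).const_sub 1
      have b := a.sub (hasDerivAt_pow 3 t)
      exact b.congr_deriv (by push_cast; ring)
    exact (h2.sub h1).congr_deriv (by ring)
  have key := mono_aux (f' := fun t => -(t * Real.exp t) + t + 3*t^2) (convex_Icc 0 1) dB ?_
  · have := key (left_mem_Icc.mpr one_pos.le) (mem_Icc.mpr ⟨hx, hx1⟩) hx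
    simp only [Real.exp_zero] at this
    linarith
  · intro t ht
    rw [interior_Icc] at ht
    obtain ⟨ht0, ht1⟩ := ht
    show (0:ℝ) ≤ -(t * Real.exp t) + t + 3*t^2
    have h3 : (1 - t) * Real.exp t ≤ 1 := by
      have h := mul_le_mul_of_nonneg_right (Real.add_one_le_exp (-t)) (Real.exp_pos t).le
      calc (1-t)*Real.exp t = (-t+1)*Real.exp t := by ring
        _ ≤ Real.exp (-t) * Real.exp t := h
        _ = 1 := by rw [← Real.exp_add]; simp
    have h4 : Real.exp t < 3 := by
      calc Real.exp t ≤ Real.exp 1 := Real.exp_le_exp.mpr ht1.le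
        _ < 3 := by have := Real.exp_one_lt_d9; linarith
    nlinarith

private lemma expC {x : ℝ} (hx : 0 ≤ x) : 1 - x^2/2 ≤ (1 + x) * Real.exp (-x) := by
  have dC : ∀ t : ℝ, HasDerivAt (fun t : ℝ => (1+t)*Real.exp (-t) - (1 - t^2/2))
      (t - t * Real.exp (-t)) t := by
    intro t
    have h2 : HasDerivAt (fun t : ℝ => (1+t)*Real.exp (-t))
        (1 * Real.exp (-t) + (1+t)*(-Real.exp (-t))) t :=
      ((hasDerivAt_id t).const_add 1).mul (hEN t)
    have h1 : HasDerivAt (fun t : ℝ => 1 - t^2/2) (-t) t := by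
      have := ((hasDerivAt_pow 2 t).div_const 2).const_sub 1
      simpa using this
    exact (h2.sub h1).congr_deriv (by ring)
  have key := mono_aux (f' := fun t => t - t * Real.exp (-t)) (convex_Ici 0) dC ?_
  · have := key (self_mem_Ici) hx hx
    simp only [Real.exp_zero, neg_zero] at this
    linarith
  · intro t ht
    simp only [interior_Ici, mem_Ioi] at ht
    show (0:ℝ) ≤ t - t * Real.exp (-t)
    have : Real.exp (-t) ≤ 1 := Real.exp_le_one_iff.mpr (by linarith)
    nlinarith

private lemma expD {x : ℝ} (hx : 0 ≤ x) : (1 + x) * Real.exp (-x) ≤ 1 - x^2/2 + x^3/3 := by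
  have dD : ∀ t : ℝ, HasDerivAt (fun t : ℝ => 1 - t^2/2 + t^3/3 - (1+t)*Real.exp (-t))
      (t * Real.exp (-t) - t + t^2) t := by
    intro t
    have h2 : HasDerivAt (fun t : ℝ => (1+t)*Real.exp (-t))
        (1 * Real.exp (-t) + (1+t)*(-Real.exp (-t))) t :=
      ((hasDerivAt_id t).const_add 1).mul (hEN t)
    have h1 : HasDerivAt (fun t : ℝ => 1 - t^2/2 + t^3/3) (-t + t^2) t := by
      have a := ((hasDerivAt_pow 2 t).div_const 2).const_sub 1
      have b := a.add ((hasDerivAt_pow 3 t).div_const 3)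
      exact b.congr_deriv (by push_cast; ring)
    exact (h1.sub h2).congr_deriv (by ring)
  have key := mono_aux (f' := fun t => t * Real.exp (-t) - t + t^2) (convex_Ici 0) dD ?_
  · have := key (self_mem_Ici) hx hx
    simp only [Real.exp_zero, neg_zero] at this
    linarith
  · intro t ht
    simp only [interior_Ici, mem_Ioi] at ht
    show (0:ℝ) ≤ t * Real.exp (-t) - t + t^2
    have : 1 - t ≤ Real.exp (-t) := by have := Real.add_one_le_exp (-t); linarith
    nlinarith

/-- Boundary behaviour of the two zeros `y₁ = 1 - p(k)`, `y₂ = 1 + q(k)` of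
`y = k e^{y-1}`: as `k → 1⁻`, `p → 0`, `q → 0`, `p/q → 1`; as `k → 0⁺`,
`p → 1`, `q → +∞`, `p/q → 0`. -/
theorem stmt13 (p q : ℝ → ℝ)
    (hp : ∀ k ∈ Set.Ioo (0:ℝ) 1, 0 < p k ∧ p k < 1)
    (hq : ∀ k ∈ Set.Ioo (0:ℝ) 1, 0 < q k)
    (h1 : ∀ k ∈ Set.Ioo (0:ℝ) 1, 1 - p k = k * Real.exp ((1 - p k) - 1))
    (h2 : ∀ k ∈ Set.Ioo (0:ℝ) 1, 1 + q k = k * Real.exp ((1 + q k) - 1)) :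
    Filter.Tendsto p (nhdsWithin 1 (Set.Iio 1)) (nhds 0) ∧
    Filter.Tendsto q (nhdsWithin 1 (Set.Iio 1)) (nhds 0) ∧
    Filter.Tendsto (fun k => p k / q k) (nhdsWithin 1 (Set.Iio 1)) (nhds 1) ∧
    Filter.Tendsto p (nhdsWithin 0 (Set.Ioi 0)) (nhds 1) ∧
    Filter.Tendsto q (nhdsWithin 0 (Set.Ioi 0)) Filter.atTop ∧
    Filter.Tendsto (fun k => p k / q k) (nhdsWithin 0 (Set.Ioi 0)) (nhds 0) := by
  -- reformulated equations
  have hk1 : ∀ k ∈ Set.Ioo (0:ℝ) 1, k = (1 - p k) * Real.exp (p k) := by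
    intro k hk
    have e := h1 k hk
    rw [show (1 - p k) - 1 = -(p k) by ring] at e
    rw [e, mul_assoc, ← Real.exp_add]
    simp
  have hk2 : ∀ k ∈ Set.Ioo (0:ℝ) 1, k = (1 + q k) * Real.exp (-(q k)) := by
    intro k hk
    have e := h2 k hk
    rw [show (1 + q k) - 1 = q k by ring] at e
    have : k * Real.exp (q k) * Real.exp (-(q k)) = (1 + q k) * Real.exp (-(q k)) := by
      rw [← e]
    rw [mul_assoc, ← Real.exp_add] at this
    simpa using this
  -- basic bounds
  have fA : ∀ k ∈ Set.Ioo (0:ℝ) 1, k ≤ 1 - (p k)^2/2 := by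
    intro k hk
    calc k = (1 - p k) * Real.exp (p k) := hk1 k hk
      _ ≤ 1 - (p k)^2/2 := expA (hp k hk).1.le
  have fB : ∀ k ∈ Set.Ioo (0:ℝ) 1, 1 - (p k)^2/2 - (p k)^3 ≤ k := by
    intro k hk
    calc 1 - (p k)^2/2 - (p k)^3 ≤ (1 - p k) * Real.exp (p k) :=
          expB (hp k hk).1.le (hp k hk).2.le
      _ = k := (hk1 k hk).symm
  have fC : ∀ k ∈ Set.Ioo (0:ℝ) 1, 1 - (q k)^2/2 ≤ k := by
    intro k hk
    calc 1 - (q k)^2/2 ≤ (1 + q k) * Real.exp (-(q k)) := expC (hq k hk).le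
      _ = k := (hk2 k hk).symm
  have fD : ∀ k ∈ Set.Ioo (0:ℝ) 1, k ≤ 1 - (q k)^2/2 + (q k)^3/3 := by
    intro k hk
    calc k = (1 + q k) * Real.exp (-(q k)) := hk2 k hk
      _ ≤ 1 - (q k)^2/2 + (q k)^3/3 := expD (hq k hk).le
  -- membership facts
  have mem01 : Set.Ioo (0:ℝ) 1 ∈ nhdsWithin 1 (Set.Iio 1) :=
    Ioo_mem_nhdsLT_of_mem (by norm_num : (1:ℝ) ∈ Set.Ioc (0:ℝ) 1)
  have mem34 : Set.Ioo (3/4:ℝ) 1 ∈ nhdsWithin 1 (Set.Iio 1) :=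
    Ioo_mem_nhdsLT_of_mem (by norm_num : (1:ℝ) ∈ Set.Ioc (3/4:ℝ) 1)
  have mem0 : Set.Ioo (0:ℝ) 1 ∈ nhdsWithin 0 (Set.Ioi 0) :=
    Ioo_mem_nhdsGT_of_mem (by norm_num : (0:ℝ) ∈ Set.Ico (0:ℝ) 1)
  have sub34 : Set.Ioo (3/4:ℝ) 1 ⊆ Set.Ioo (0:ℝ) 1 := by
    intro x hx
    exact ⟨by linarith [hx.1], hx.2⟩
  -- q < 1 for k > 3/4
  have hqlt1 : ∀ k ∈ Set.Ioo (3/4:ℝ) 1, q k < 1 := by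
    intro k hk
    by_contra hcon
    push_neg at hcon
    have hk' := sub34 hk
    have e := hk2 k hk'
    have hkQ : k * Real.exp (q k) = 1 + q k := by
      nth_rewrite 1 [e]
      rw [mul_assoc, ← Real.exp_add]
      simp
    have hQe : Real.exp 1 * q k ≤ Real.exp (q k) := by
      have h := Real.add_one_le_exp (q k - 1)
      have h' : q k ≤ Real.exp (q k - 1) := by linarith
      have := mul_le_mul_of_nonneg_left h' (Real.exp_pos 1).le
      calc Real.exp 1 * q k ≤ Real.exp 1 * Real.exp (q k - 1) := this
        _ = Real.exp (q k) := by rw [← Real.exp_add]; ring_nf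
    have he1 : (2.7182818283:ℝ) < Real.exp 1 := Real.exp_one_gt_d9
    nlinarith [hk.1, Real.exp_pos (q k)]
  -- Part 1 : p → 0 as k → 1⁻
  have T1 : Filter.Tendsto p (nhdsWithin 1 (Set.Iio 1)) (nhds 0) := by
    have hup : Filter.Tendsto (fun k : ℝ => Real.sqrt (2*(1-k)))
        (nhdsWithin 1 (Set.Iio 1)) (nhds 0) := by
      have hc : Filter.Tendsto (fun k : ℝ => 2*(1-k)) (nhds 1) (nhds 0) := by
        have : Continuous (fun k : ℝ => 2*(1-k)) := by fun_prop
        have := this.tendsto 1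
        simpa using this
      have := (Real.continuous_sqrt.tendsto 0).comp hc
      simp only [Real.sqrt_zero] at this
      exact this.mono_left nhdsWithin_le_nhds
    refine tendsto_of_tendsto_of_tendsto_of_le_of_le' tendsto_const_nhds hup ?_ ?_
    · filter_upwards [mem01] with k hk
      exact (hp k hk).1.le
    · filter_upwards [mem01] with k hk
      rw [Real.le_sqrt (hp k hk).1.le (by nlinarith [hk.2])]
      have := fA k hk
      linarith
  -- Part 2 : q → 0 as k → 1⁻
  have T2 : Filter.Tendsto q (nhdsWithin 1 (Set.Iio 1)) (nhds 0) := by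
    have hup : Filter.Tendsto (fun k : ℝ => Real.sqrt (6*(1-k)))
        (nhdsWithin 1 (Set.Iio 1)) (nhds 0) := by
      have hc : Filter.Tendsto (fun k : ℝ => 6*(1-k)) (nhds 1) (nhds 0) := by
        have : Continuous (fun k : ℝ => 6*(1-k)) := by fun_prop
        have := this.tendsto 1
        simpa using this
      have := (Real.continuous_sqrt.tendsto 0).comp hc
      simp only [Real.sqrt_zero] at this
      exact this.mono_left nhdsWithin_le_nhds
    refine tendsto_of_tendsto_of_tendsto_of_le_of_le' tendsto_const_nhds hup ?_ ?_
    · filter_upwards [mem34] with k hk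
      exact (hq k (sub34 hk)).le
    · filter_upwards [mem34] with k hk
      have hk' := sub34 hk
      have hQ1 := hqlt1 k hk
      have hQ0 := hq k hk'
      rw [Real.le_sqrt hQ0.le (by nlinarith [hk.2])]
      have hd := fD k hk'
      nlinarith
  -- Part 3 : p/q → 1 as k → 1⁻
  have T3 : Filter.Tendsto (fun k => p k / q k) (nhdsWithin 1 (Set.Iio 1)) (nhds 1) := by
    have hlowt : Filter.Tendsto (fun k => Real.sqrt ((1 - 2*q k/3)/(1 + 2*p k)))
        (nhdsWithin 1 (Set.Iio 1)) (nhds 1) := by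
      have hnum : Filter.Tendsto (fun k => 1 - 2*q k/3) (nhdsWithin 1 (Set.Iio 1))
          (nhds 1) := by
        have := (tendsto_const_nhds (x := (1:ℝ))
          (f := nhdsWithin 1 (Set.Iio 1))).sub ((T2.const_mul (2:ℝ)).div_const 3)
        simpa using this
      have hden : Filter.Tendsto (fun k => 1 + 2*p k) (nhdsWithin 1 (Set.Iio 1))
          (nhds 1) := by
        have := (tendsto_const_nhds (x := (1:ℝ))
          (f := nhdsWithin 1 (Set.Iio 1))).add (T1.const_mul (2:ℝ))
        simpa using this
      have hdiv := hnum.div hden (by norm_num)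
      have := (Real.continuous_sqrt.tendsto 1).comp (by simpa using hdiv)
      simpa [Real.sqrt_one, Function.comp_def, Pi.div_apply] using this
    refine tendsto_of_tendsto_of_tendsto_of_le_of_le' hlowt tendsto_const_nhds ?_ ?_
    · filter_upwards [mem34] with k hk
      have hk' := sub34 hk
      have hP0 := (hp k hk').1
      have hP1 := (hp k hk').2
      have hQ0 := hq k hk'
      have hQ1 := hqlt1 k hk
      have hb := fB k hk'
      have hd := fD k hk'
      have hsq : (1 - 2*q k/3)/(1 + 2*p k) ≤ (p k / q k)^2 := by
        rw [div_pow, div_le_div_iff₀ (by linarith) (by positivity)]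
        nlinarith
      calc Real.sqrt ((1 - 2*q k/3)/(1 + 2*p k)) ≤ Real.sqrt ((p k / q k)^2) :=
            Real.sqrt_le_sqrt hsq
        _ = p k / q k := Real.sqrt_sq (by positivity)
    · filter_upwards [mem01] with k hk
      have hP0 := (hp k hk).1
      have hQ0 := hq k hk
      have ha := fA k hk
      have hc := fC k hk
      have hple : p k ≤ q k := by nlinarith
      exact (div_le_one hQ0).mpr hple
  -- Part 4 : p → 1 as k → 0⁺
  have T4 : Filter.Tendsto p (nhdsWithin 0 (Set.Ioi 0)) (nhds 1) := by
    have hlow : Filter.Tendsto (fun k : ℝ => 1 - k) (nhdsWithin 0 (Set.Ioi 0))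
        (nhds 1) := by
      have : Continuous (fun k : ℝ => 1 - k) := by fun_prop
      have := this.tendsto 0
      simp only [sub_zero] at this
      exact this.mono_left nhdsWithin_le_nhds
    refine tendsto_of_tendsto_of_tendsto_of_le_of_le' hlow tendsto_const_nhds ?_ ?_
    · filter_upwards [mem0] with k hk
      have e := h1 k hk
      rw [show (1 - p k) - 1 = -(p k) by ring] at e
      have hexp : Real.exp (-(p k)) ≤ 1 :=
        Real.exp_le_one_iff.mpr (by linarith [(hp k hk).1])
      have : k * Real.exp (-(p k)) ≤ k * 1 :=
        mul_le_mul_of_nonneg_left hexp hk.1.le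
      rw [← e] at this
      linarith
    · filter_upwards [mem0] with k hk
      exact (hp k hk).2.le
  -- Part 5 : q → ∞ as k → 0⁺
  have T5 : Filter.Tendsto q (nhdsWithin 0 (Set.Ioi 0)) Filter.atTop := by
    have hlog : Filter.Tendsto (fun k : ℝ => -Real.log k) (nhdsWithin 0 (Set.Ioi 0))
        Filter.atTop :=
      tendsto_neg_atBot_atTop.comp Real.tendsto_log_nhdsGT_zero
    refine tendsto_atTop_mono' _ ?_ hlog
    filter_upwards [mem0] with k hk
    have e := hk2 k hk
    have hge : Real.exp (-(q k)) ≤ k := by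
      have hQ := hq k hk
      calc Real.exp (-(q k)) = 1 * Real.exp (-(q k)) := (one_mul _).symm
        _ ≤ (1 + q k) * Real.exp (-(q k)) :=
            mul_le_mul_of_nonneg_right (by linarith) (Real.exp_pos _).le
        _ = k := e.symm
    have := Real.log_le_log (Real.exp_pos _) hge
    rw [Real.log_exp] at this
    linarith
  -- Part 6 : p/q → 0 as k → 0⁺
  have T6 : Filter.Tendsto (fun k => p k / q k) (nhdsWithin 0 (Set.Ioi 0)) (nhds 0) := by
    have hup : Filter.Tendsto (fun k => (q k)⁻¹) (nhdsWithin 0 (Set.Ioi 0)) (nhds 0) :=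
      tendsto_inv_atTop_zero.comp T5
    refine tendsto_of_tendsto_of_tendsto_of_le_of_le' tendsto_const_nhds hup ?_ ?_
    · filter_upwards [mem0] with k hk
      exact div_nonneg (hp k hk).1.le (hq k hk).le
    · filter_upwards [mem0] with k hk
      have hQ := hq k hk
      rw [div_eq_mul_inv]
      calc p k * (q k)⁻¹ ≤ 1 * (q k)⁻¹ :=
            mul_le_mul_of_nonneg_right (hp k hk).2.le (by positivity)
        _ = (q k)⁻¹ := one_mul _
  exact ⟨T1, T2, T3, T4, T5, T6⟩
end
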